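/- Let R, C, O be {0,1}-valued random variables, X discrete, and let A be an event (representing historical click feedback) with P(A, X=x) > 0. Suppose there exist events B (historical relevance) and D (historical observation) such that A = B ∩ D, and B and D are conditionally independent given X, and also given (R, X). Then P(R=1 | A, X=x) = [ P(R=1 | D, X=x) / P(R=1|X=x) ] · P(R=1 | B, X=x), provided all conditional probabilities involved are positive. -/

import Mathlib

open scoped Classical
open Finset

noncomputable def pr {Ω : Type*} [Fintype Ω] (P : Ω → ℝ) (E : Ω → Prop) : ℝ :=
  ∑ ω, if E ω then P ω else 0

noncomputable def cpr {Ω : Type*} [Fintype Ω] (P : Ω → ℝ) (E F : Ω → Prop) : ℝ :=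
  pr P (fun ω => E ω ∧ F ω) / pr P F

noncomputable def klTerm (a b : ℝ) : ℝ :=
  if a = 0 then 0 else a * Real.log (a / b)

noncomputable def condMI {Ω α : Type*} [Fintype Ω] (P : Ω → ℝ)
    (R O : Ω → ℕ) (X : Ω → α) (x : α) : ℝ :=
  ∑ r ∈ ({0, 1} : Finset ℕ), ∑ o ∈ ({0, 1} : Finset ℕ),
    klTerm (cpr P (fun ω => R ω = r ∧ O ω = o) (fun ω => X ω = x))
      (cpr P (fun ω => R ω = r) (fun ω => X ω = x) *
        cpr P (fun ω => O ω = o) (fun ω => X ω = x))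

noncomputable def expect {Ω : Type*} [Fintype Ω] (P : Ω → ℝ) (f : Ω → ℝ) : ℝ :=
  ∑ ω, P ω * f ω

noncomputable def cexpect {Ω : Type*} [Fintype Ω] (P : Ω → ℝ) (f : Ω → ℝ) (E : Ω → Prop) : ℝ :=
  (∑ ω, if E ω then P ω * f ω else 0) / pr P E

lemma pr_congr {Ω : Type*} [Fintype Ω] (P : Ω → ℝ) {E F : Ω → Prop}
    (h : ∀ ω, E ω ↔ F ω) : pr P E = pr P F := by
  unfold pr; exact Finset.sum_congr rfl (fun ω _ => by simp [h ω])

lemma pr_mono {Ω : Type*} [Fintype Ω] {P : Ω → ℝ} (hP : ∀ ω, 0 ≤ P ω)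
    {E F : Ω → Prop} (h : ∀ ω, E ω → F ω) : pr P E ≤ pr P F := by
  unfold pr
  apply Finset.sum_le_sum
  intro ω _
  by_cases hE : E ω
  · simp [hE, h ω hE]
  · simp only [hE, if_false]
    split <;> [exact hP ω; exact le_rfl]

theorem stmt_7 {Ω α : Type*} [Fintype Ω] (P : Ω → ℝ) (R : Ω → ℕ) (X : Ω → α)
    (A B D : Ω → Prop) (x : α)
    (hP : ∀ ω, 0 ≤ P ω) (hsum : ∑ ω, P ω = 1)
    (hR : ∀ ω, R ω = 0 ∨ R ω = 1)
    (hA : ∀ ω, A ω ↔ (B ω ∧ D ω))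
    (hAx : 0 < pr P (fun ω => A ω ∧ X ω = x))
    (hCIX : ∀ x' : α, 0 < pr P (fun ω => X ω = x') →
      cpr P (fun ω => B ω ∧ D ω) (fun ω => X ω = x') =
        cpr P B (fun ω => X ω = x') * cpr P D (fun ω => X ω = x'))
    (hCIRX : ∀ r : ℕ, ∀ x' : α, 0 < pr P (fun ω => R ω = r ∧ X ω = x') →
      cpr P (fun ω => B ω ∧ D ω) (fun ω => R ω = r ∧ X ω = x') =
        cpr P B (fun ω => R ω = r ∧ X ω = x') *
          cpr P D (fun ω => R ω = r ∧ X ω = x'))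
    (hpos1 : 0 < cpr P (fun ω => R ω = 1) (fun ω => X ω = x))
    (hpos2 : 0 < pr P (fun ω => B ω ∧ X ω = x))
    (hpos3 : 0 < pr P (fun ω => D ω ∧ X ω = x))
    (hpos4 : 0 < cpr P (fun ω => R ω = 1) (fun ω => B ω ∧ X ω = x))
    (hpos5 : 0 < cpr P (fun ω => R ω = 1) (fun ω => D ω ∧ X ω = x)) :
    cpr P (fun ω => R ω = 1) (fun ω => A ω ∧ X ω = x) =
      (cpr P (fun ω => R ω = 1) (fun ω => D ω ∧ X ω = x) /
          cpr P (fun ω => R ω = 1) (fun ω => X ω = x)) *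
        cpr P (fun ω => R ω = 1) (fun ω => B ω ∧ X ω = x) := by
  set a := pr P (fun ω => R ω = 1 ∧ (B ω ∧ D ω) ∧ X ω = x) with ha
  set b := pr P (fun ω => (B ω ∧ D ω) ∧ X ω = x) with hb
  set c := pr P (fun ω => R ω = 1 ∧ X ω = x) with hc
  set d := pr P (fun ω => X ω = x) with hd
  set e := pr P (fun ω => B ω ∧ X ω = x) with he
  set f := pr P (fun ω => D ω ∧ X ω = x) with hf
  set g := pr P (fun ω => R ω = 1 ∧ B ω ∧ X ω = x) with hg
  set h := pr P (fun ω => R ω = 1 ∧ D ω ∧ X ω = x) with hh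
  have hbpos : 0 < b := by
    have : pr P (fun ω => A ω ∧ X ω = x) = b := pr_congr P (fun ω => by simp [hA ω])
    linarith [hAx, this]
  have hdpos : 0 < d := lt_of_lt_of_le hpos2 (pr_mono hP (fun ω hω => hω.2))
  have hcpos : 0 < c := by
    have hcd : 0 < c / d := hpos1
    rcases div_pos_iff.mp hcd with ⟨h', _⟩ | ⟨_, h'⟩
    · exact h'
    · linarith
  have h1 : b = e * f / d := by
    have key := hCIX x hdpos
    unfold cpr at key
    rw [eq_div_iff hdpos.ne']
    apply mul_right_cancel₀ hdpos.ne'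
    have : b / d = e / d * (f / d) := key
    field_simp at this
    linear_combination d * this
  have h2 : a = g * h / c := by
    have key := hCIRX 1 x hcpos
    unfold cpr at key
    have e1 : pr P (fun ω => (B ω ∧ D ω) ∧ R ω = 1 ∧ X ω = x) = a :=
      pr_congr P (fun ω => by tauto)
    have e2 : pr P (fun ω => B ω ∧ R ω = 1 ∧ X ω = x) = g :=
      pr_congr P (fun ω => by tauto)
    have e3 : pr P (fun ω => D ω ∧ R ω = 1 ∧ X ω = x) = h :=
      pr_congr P (fun ω => by tauto)
    rw [e1, e2, e3] at key
    rw [eq_div_iff hcpos.ne']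
    apply mul_right_cancel₀ hcpos.ne'
    have : a / c = g / c * (h / c) := key
    field_simp at this
    linear_combination c * this
  have hepos : 0 < e := hpos2
  have hfpos : 0 < f := hpos3
  have gA : cpr P (fun ω => R ω = 1) (fun ω => A ω ∧ X ω = x) = a / b := by
    unfold cpr
    rw [pr_congr P (E := fun ω => R ω = 1 ∧ A ω ∧ X ω = x)
        (F := fun ω => R ω = 1 ∧ (B ω ∧ D ω) ∧ X ω = x) (fun ω => by simp [hA ω]),
      pr_congr P (E := fun ω => A ω ∧ X ω = x)
        (F := fun ω => (B ω ∧ D ω) ∧ X ω = x) (fun ω => by simp [hA ω])]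
  have gD : cpr P (fun ω => R ω = 1) (fun ω => D ω ∧ X ω = x) = h / f := rfl
  have gB : cpr P (fun ω => R ω = 1) (fun ω => B ω ∧ X ω = x) = g / e := rfl
  have gX : cpr P (fun ω => R ω = 1) (fun ω => X ω = x) = c / d := rfl
  rw [gA, gD, gB, gX, h1, h2]
  field_simp
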